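/- Let A be a (unital, associative) ring and G a group. If the group ring A[G] is a centrally essential ring, then A is a centrally essential ring. -/

import Mathlib

/-- A ring `R` is *centrally essential* if for every nonzero `r ∈ R` there is a central
element `c` such that `c * r` is a nonzero central element. -/
def IsCentrallyEssential (R : Type*) [Ring R] : Prop :=
  ∀ r : R, r ≠ 0 → ∃ c ∈ Subring.center R, c * r ≠ 0 ∧ c * r ∈ Subring.center R

theorem base_ring_centrally_essential_of_group_ring
    (A : Type*) [Ring A] (G : Type*) [Group G]
    (h : IsCentrallyEssential (MonoidAlgebra A G)) :
    IsCentrallyEssential A := by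
  intro a ha
  obtain ⟨c, hc, hne, hcent⟩ := h (MonoidAlgebra.single 1 a)
    (by simpa [MonoidAlgebra.single_eq_zero] using ha)
  set d := c * MonoidAlgebra.single (1 : G) a with hd
  obtain ⟨g, hg⟩ : ∃ g, d.coeff g ≠ 0 := by
    by_contra h'
    push_neg at h'
    exact hne (MonoidAlgebra.ext (Finsupp.ext h'))
  have hdg : d.coeff g = c.coeff g * a := MonoidAlgebra.mul_single_one_apply c a g
  refine ⟨c.coeff g, ?_, ?_, ?_⟩
  · rw [Subring.mem_center_iff]
    intro b
    have hb := Subring.mem_center_iff.mp hc (MonoidAlgebra.single 1 b)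
    calc b * c.coeff g = (MonoidAlgebra.single (1:G) b * c).coeff g :=
          (MonoidAlgebra.single_one_mul_apply c b g).symm
      _ = (c * MonoidAlgebra.single (1:G) b).coeff g := by rw [hb]
      _ = c.coeff g * b := MonoidAlgebra.mul_single_one_apply c b g
  · rw [← hdg]; exact hg
  · rw [← hdg, Subring.mem_center_iff]
    intro b
    have hb := Subring.mem_center_iff.mp hcent (MonoidAlgebra.single 1 b)
    calc b * d.coeff g = (MonoidAlgebra.single (1:G) b * d).coeff g :=
          (MonoidAlgebra.single_one_mul_apply d b g).symm
      _ = (d * MonoidAlgebra.single (1:G) b).coeff g := by rw [hb]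
      _ = d.coeff g * b := MonoidAlgebra.mul_single_one_apply d b g
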